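/- The set C = [0,1/2]^2 ∪ (1/2,1]^2 ⊆ [0,1]^2 is a symmetric measurable covering single-insertion code over [0,1] (i.e., every sequence in [0,1]^3 has a length-2 subsequence in C) of Lebesgue measure 1/2; consequently s([0,1],3,2) = s*([0,1],3,2) = 1/2. -/

import Mathlib

open MeasureTheory Filter Topology ENNReal

/-- `x` covers `a` if `x` is a subsequence of `a`. -/
def Covers {X : Type*} {r k : ℕ} (x : Fin r → X) (a : Fin k → X) : Prop :=
  ∃ g : Fin r → Fin k, StrictMono g ∧ ∀ i, a (g i) = x i

/-- `C ⊆ X^r` is a covering `(k-r)`-insertion code over `X`: every sequence in `X^k`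
is covered by some sequence in `C`. -/
def IsCoveringCode {X : Type*} (r k : ℕ) (C : Set (Fin r → X)) : Prop :=
  ∀ a : Fin k → X, ∃ x ∈ C, Covers x a

/-- Minimum size of a covering `(k-r)`-insertion code over the alphabet `[n]`. -/
noncomputable def covNum (n k r : ℕ) : ℕ :=
  sInf {m | ∃ C : Finset (Fin r → Fin n), IsCoveringCode r k (↑C : Set (Fin r → Fin n)) ∧ C.card = m}

/-- The unit cube `[0,1]^r`. -/
def unitCube (r : ℕ) : Set (Fin r → ℝ) := {x | ∀ i, x i ∈ Set.Icc (0 : ℝ) 1}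

/-- `C ⊆ [0,1]^r` covers `[0,1]^k`. -/
def CoversCube (r k : ℕ) (C : Set (Fin r → ℝ)) : Prop :=
  ∀ a ∈ unitCube k, ∃ x ∈ C, Covers x a

/-- Delete the `i`-th coordinate of a length `r+1` sequence. -/
def deleteAt {X : Type*} {r : ℕ} (i : Fin (r + 1)) (x : Fin (r + 1) → X) : Fin r → X :=
  x ∘ i.succAbove

/-- `extSet C i` is the set `C_i` of sequences in `X^{r+1}` whose subsequence obtained by
deleting the `i`-th coordinate belongs to `C`. -/
def extSet {X : Type*} {r : ℕ} (C : Set (Fin r → X)) (i : Fin (r + 1)) :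
    Set (Fin (r + 1) → X) :=
  {x | deleteAt i x ∈ C}

/-- A set of sequences is symmetric if it is closed under permuting the coordinates. -/
def IsSymmetric {X : Type*} {k : ℕ} (M : Set (Fin k → X)) : Prop :=
  ∀ x ∈ M, ∀ σ : Equiv.Perm (Fin k), x ∘ σ ∈ M

/-- The symmetric closure of a set of sequences. -/
def SymClosure {X : Type*} {k : ℕ} (M : Set (Fin k → X)) : Set (Fin k → X) :=
  {x | ∃ σ : Equiv.Perm (Fin k), x ∘ σ ∈ M}

/-- A Turán `(n,k,r)`-system: a family of `r`-element subsets of `[n]` such that every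
`k`-element subset of `[n]` contains a member of the family. -/
def IsTuranSystem (n k r : ℕ) (F : Finset (Finset (Fin n))) : Prop :=
  (∀ A ∈ F, A.card = r) ∧ ∀ K : Finset (Fin n), K.card = k → ∃ A ∈ F, A ⊆ K

/-- Minimum size of a Turán `(n,k,r)`-system. -/
noncomputable def turanNum (n k r : ℕ) : ℕ :=
  sInf {m | ∃ F : Finset (Finset (Fin n)), IsTuranSystem n k r F ∧ F.card = m}

/-- The code `[0,1/2]² ∪ (1/2,1]²`. -/
def halfCode : Set (Fin 2 → ℝ) :=
  {x | ∀ i, x i ∈ Set.Icc (0 : ℝ) (1 / 2)} ∪ {x | ∀ i, x i ∈ Set.Ioc (1 / 2 : ℝ) 1}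

lemma key_lower (C : Set (ℝ × ℝ)) (hm : MeasurableSet C)
    (hsub : C ⊆ Set.Icc (0:ℝ) 1 ×ˢ Set.Icc (0:ℝ) 1)
    (hcov : ∀ x ∈ Set.Icc (0:ℝ) 1, ∀ y ∈ Set.Icc (0:ℝ) 1, ∀ z ∈ Set.Icc (0:ℝ) 1,
      (x,y) ∈ C ∨ (x,z) ∈ C ∨ (y,z) ∈ C) :
    1/2 ≤ volume C := by
  classical
  set μ : Measure ℝ := volume with hμ
  set I : Set ℝ := Set.Icc (0:ℝ) 1 with hI
  have hImeas : MeasurableSet I := measurableSet_Icc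
  have hμI : μ I = 1 := by simp [hμ, hI]
  set u : ℝ → ℝ≥0∞ := fun x => μ (Prod.mk x ⁻¹' C) with hu
  set v : ℝ → ℝ≥0∞ := fun y => μ ((fun x => (x, y)) ⁻¹' C) with hv
  set w : ℝ → ℝ≥0∞ := fun x => u x + v x with hw
  have hum : Measurable u := measurable_measure_prodMk_left hm
  have hvm : Measurable v := measurable_measure_prodMk_right hm
  have hwm : Measurable w := hum.add hvm
  -- bounds
  have hu1 : ∀ x, u x ≤ 1 := by
    intro x
    calc u x ≤ μ I := measure_mono (fun y hy => (hsub hy).2)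
    _ = 1 := hμI
  have hv1 : ∀ y, v y ≤ 1 := by
    intro y
    calc v y ≤ μ I := measure_mono (fun x hx => (hsub hx).1)
    _ = 1 := hμI
  have hw2 : ∀ x, w x ≤ 2 := fun x => by
    calc w x ≤ 1 + 1 := add_le_add (hu1 x) (hv1 x)
    _ = 2 := one_add_one_eq_two
  -- pointwise covering facts
  have hkey : ∀ x ∈ I, ∀ y ∈ I, (x,y) ∉ C → 2 ≤ w x + w y := by
    intro x hx y hy hxy
    have h1 : (1:ℝ≥0∞) ≤ u x + u y := by
      have hsub' : I ⊆ (Prod.mk x ⁻¹' C) ∪ (Prod.mk y ⁻¹' C) := by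
        intro z hz
        rcases hcov x hx y hy z hz with h | h | h
        · exact absurd h hxy
        · exact Or.inl h
        · exact Or.inr h
      calc (1:ℝ≥0∞) = μ I := hμI.symm
      _ ≤ μ ((Prod.mk x ⁻¹' C) ∪ (Prod.mk y ⁻¹' C)) := measure_mono hsub'
      _ ≤ u x + u y := measure_union_le _ _
    have h2 : (1:ℝ≥0∞) ≤ v x + v y := by
      have hsub' : I ⊆ ((fun z => (z, x)) ⁻¹' C) ∪ ((fun z => (z, y)) ⁻¹' C) := by
        intro z hz
        rcases hcov z hz x hx y hy with h | h | h
        · exact Or.inl h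
        · exact Or.inr h
        · exact absurd h hxy
      calc (1:ℝ≥0∞) = μ I := hμI.symm
      _ ≤ μ (((fun z => (z, x)) ⁻¹' C) ∪ ((fun z => (z, y)) ⁻¹' C)) := measure_mono hsub'
      _ ≤ v x + v y := measure_union_le _ _
    calc (2:ℝ≥0∞) = 1 + 1 := one_add_one_eq_two.symm
    _ ≤ (u x + u y) + (v x + v y) := add_le_add h1 h2
    _ = w x + w y := by rw [hw]; ring
  -- the bad set T
  set T : Set (ℝ × ℝ) := (I ×ˢ I) \ C with hT
  have hTmeas : MeasurableSet T := (hImeas.prod hImeas).diff hm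
  set c : ℝ≥0∞ := volume C with hc
  have hc1 : c ≤ 1 := by
    calc c ≤ volume (I ×ˢ I) := measure_mono hsub
    _ = 1 := by rw [Measure.volume_eq_prod, Measure.prod_prod, hμI, mul_one]
  have hcfin : c ≠ ∞ := fun h => by simp [h] at hc1
  have hTvol : (μ.prod μ) T = 1 - c := by
    have : (μ.prod μ) T = volume T := rfl
    rw [this, hT, measure_diff hsub hm.nullMeasurableSet hcfin,
      Measure.volume_eq_prod, Measure.prod_prod, hμI, mul_one]
    rfl
  -- section integrals
  have prodIntegral : ∀ (f : ℝ → ℝ≥0∞), Measurable f →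
      ∫⁻ p in T, f p.1 ∂(μ.prod μ) = ∫⁻ x, f x * μ (Prod.mk x ⁻¹' T) ∂μ := by
    intro f hf
    rw [← lintegral_indicator hTmeas]
    have hmA : Measurable (T.indicator (fun p : ℝ × ℝ => f p.1)) :=
      Measurable.indicator (by exact hf.comp measurable_fst) hTmeas
    rw [lintegral_prod _ hmA.aemeasurable]
    have inner : ∀ x, ∫⁻ y, T.indicator (fun p => f p.1) (x, y) ∂μ
        = f x * μ (Prod.mk x ⁻¹' T) := by
      intro x
      have heq : (fun y => T.indicator (fun p => f p.1) (x, y))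
          = (Prod.mk x ⁻¹' T).indicator (fun _ => f x) := by
        ext y
        simp only [Set.indicator_apply, Set.mem_preimage]
      rw [heq, lintegral_indicator_const (measurable_prodMk_left hTmeas)]
    simp_rw [inner]
  have prodIntegral2 : ∀ (f : ℝ → ℝ≥0∞), Measurable f →
      ∫⁻ p in T, f p.2 ∂(μ.prod μ) = ∫⁻ y, f y * μ ((fun x => (x, y)) ⁻¹' T) ∂μ := by
    intro f hf
    rw [← lintegral_indicator hTmeas]
    have hmA : Measurable (T.indicator (fun p : ℝ × ℝ => f p.2)) :=
      Measurable.indicator (by exact hf.comp measurable_snd) hTmeas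
    rw [lintegral_prod_symm _ hmA.aemeasurable]
    have inner : ∀ y, ∫⁻ x, T.indicator (fun p => f p.2) (x, y) ∂μ
        = f y * μ ((fun x => (x, y)) ⁻¹' T) := by
      intro y
      have heq : (fun x => T.indicator (fun p => f p.2) (x, y))
          = ((fun x => (x, y)) ⁻¹' T).indicator (fun _ => f y) := by
        ext x
        simp only [Set.indicator_apply, Set.mem_preimage]
      rw [heq, lintegral_indicator_const (measurable_prodMk_right hTmeas)]
    simp_rw [inner]
  set m : ℝ → ℝ≥0∞ := fun x => μ (Prod.mk x ⁻¹' T) with hmdef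
  set n : ℝ → ℝ≥0∞ := fun y => μ ((fun x => (x, y)) ⁻¹' T) with hndef
  have hmm : Measurable m := measurable_measure_prodMk_left hTmeas
  have hnm : Measurable n := measurable_measure_prodMk_right hTmeas
  -- vanishing off I
  have hu0 : ∀ x ∉ I, u x = 0 := by
    intro x hx
    have : Prod.mk x ⁻¹' C = ∅ := by
      ext y
      simp only [Set.mem_preimage, Set.mem_empty_iff_false, iff_false]
      exact fun h => hx (hsub h).1
    rw [hu]; simp only; rw [this, measure_empty]
  have hv0 : ∀ y ∉ I, v y = 0 := by
    intro y hy
    have : (fun x => (x, y)) ⁻¹' C = ∅ := by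
      ext x
      simp only [Set.mem_preimage, Set.mem_empty_iff_false, iff_false]
      exact fun h => hy (hsub h).2
    rw [hv]; simp only; rw [this, measure_empty]
  have hw0 : ∀ x ∉ I, w x = 0 := by
    intro x hx; rw [hw]; simp only; rw [hu0 x hx, hv0 x hx, add_zero]
  -- section sums on I
  have hmu1 : ∀ x ∈ I, m x + u x = 1 := by
    intro x hx
    have hTx : Prod.mk x ⁻¹' T = I \ (Prod.mk x ⁻¹' C) := by
      ext y
      simp only [hT, Set.mem_preimage, Set.mem_diff, Set.mem_prod]
      exact ⟨fun ⟨⟨_, h2⟩, h3⟩ => ⟨h2, h3⟩, fun ⟨h2, h3⟩ => ⟨⟨hx, h2⟩, h3⟩⟩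
    rw [hmdef]; simp only; rw [hTx, add_comm]
    rw [measure_add_diff ((measurable_prodMk_left hm).nullMeasurableSet) I]
    have hun : (Prod.mk x ⁻¹' C) ∪ I = I :=
      Set.union_eq_self_of_subset_left (fun y hy => (hsub hy).2)
    rw [hun, hμI]
  have hnv1 : ∀ y ∈ I, n y + v y = 1 := by
    intro y hy
    have hTy : (fun x => (x, y)) ⁻¹' T = I \ ((fun x => (x, y)) ⁻¹' C) := by
      ext x
      simp only [hT, Set.mem_preimage, Set.mem_diff, Set.mem_prod]
      exact ⟨fun ⟨⟨h1, _⟩, h3⟩ => ⟨h1, h3⟩, fun ⟨h1, h3⟩ => ⟨⟨h1, hy⟩, h3⟩⟩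
    rw [hndef]; simp only; rw [hTy, add_comm]
    rw [measure_add_diff ((measurable_prodMk_right hm).nullMeasurableSet) I]
    have hun : ((fun x => (x, y)) ⁻¹' C) ∪ I = I :=
      Set.union_eq_self_of_subset_left (fun x hx => (hsub hx).1)
    rw [hun, hμI]
  -- pointwise identity
  have hpoint : ∀ x, w x * m x + w x * n x + w x * w x = 2 * w x := by
    intro x
    by_cases hx : x ∈ I
    · have : m x + n x + w x = 2 := by
        have h1 := hmu1 x hx
        have h2 := hnv1 x hx
        calc m x + n x + w x = (m x + u x) + (n x + v x) := by rw [hw]; ring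
        _ = 1 + 1 := by rw [h1, h2]
        _ = 2 := one_add_one_eq_two
      calc w x * m x + w x * n x + w x * w x = w x * (m x + n x + w x) := by ring
      _ = 2 * w x := by rw [this, mul_comm]
    · rw [hw0 x hx]; simp
  -- integral identities
  have hintu : ∫⁻ x, u x ∂μ = c := by
    rw [hc, Measure.volume_eq_prod, Measure.prod_apply hm]
  have hintv : ∫⁻ y, v y ∂μ = c := by
    rw [hc, Measure.volume_eq_prod, Measure.prod_apply_symm hm]
  have hintw : ∫⁻ x, w x ∂μ = c + c := by
    rw [hw]
    rw [lintegral_add_left hum]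
    rw [hintu, hintv]
  -- lower bound on the T-integral
  have hTineq : 2 * (μ.prod μ) T ≤ ∫⁻ x, w x * m x ∂μ + ∫⁻ y, w y * n y ∂μ := by
    have step1 : 2 * (μ.prod μ) T = ∫⁻ _ in T, (2:ℝ≥0∞) ∂(μ.prod μ) := by
      rw [setLIntegral_const]
    have step2 : ∫⁻ _ in T, (2:ℝ≥0∞) ∂(μ.prod μ) ≤ ∫⁻ p in T, (w p.1 + w p.2) ∂(μ.prod μ) := by
      refine setLIntegral_mono ((hwm.comp measurable_fst).add (hwm.comp measurable_snd)) ?_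
      intro p hp
      rcases hp with ⟨hpI, hpC⟩
      rw [Set.mem_prod] at hpI
      exact hkey p.1 hpI.1 p.2 hpI.2 (by rwa [Prod.mk.eta])
    have step3 : ∫⁻ p in T, (w p.1 + w p.2) ∂(μ.prod μ)
        = ∫⁻ x, w x * m x ∂μ + ∫⁻ y, w y * n y ∂μ := by
      rw [lintegral_add_left (show Measurable fun p : ℝ × ℝ => w p.1 from hwm.comp measurable_fst)]
      rw [prodIntegral w hwm, prodIntegral2 w hwm]
    rw [step1, ← step3]
    exact step2
  -- total integral identity
  have hsum : (∫⁻ x, w x * m x ∂μ + ∫⁻ y, w y * n y ∂μ) + ∫⁻ x, w x * w x ∂μ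
      = 2 * (c + c) := by
    rw [← lintegral_add_left (f := fun x => w x * m x) (hwm.mul hmm)]
    rw [← lintegral_add_left (f := fun x => w x * m x + w x * n x) ((hwm.mul hmm).add (hwm.mul hnm))]
    calc ∫⁻ x, (w x * m x + w x * n x + w x * w x) ∂μ = ∫⁻ x, 2 * w x ∂μ :=
      lintegral_congr hpoint
    _ = 2 * ∫⁻ x, w x ∂μ := lintegral_const_mul 2 hwm
    _ = 2 * (c + c) := by rw [hintw]
  -- Jensen / Cauchy-Schwarz
  have hJ : (c + c) * (c + c) ≤ ∫⁻ x, w x * w x ∂μ := by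
    have hwind : ∀ x, w x = I.indicator w x := by
      intro x
      by_cases hx : x ∈ I
      · rw [Set.indicator_of_mem hx]
      · rw [Set.indicator_of_notMem hx, hw0 x hx]
    have hIres : ∫⁻ x in I, w x ∂μ = c + c := by
      rw [← lintegral_indicator hImeas, ← lintegral_congr hwind, hintw]
    have hconj : Real.HolderConjugate 2 2 := Real.HolderConjugate.two_two
    have hcs := ENNReal.lintegral_mul_le_Lp_mul_Lq (μ.restrict I) hconj
      hwm.aemeasurable (aemeasurable_const (b := (1:ℝ≥0∞)))
    simp only [Pi.mul_apply, mul_one, ENNReal.one_rpow] at hcs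
    rw [lintegral_const, Measure.restrict_apply_univ, hμI, mul_one, ENNReal.one_rpow, mul_one]
      at hcs
    rw [hIres] at hcs
    have hsq : (c + c) * (c + c) ≤ ∫⁻ x in I, w x ^ (2:ℝ) ∂μ := by
      have h2 : ((c+c) : ℝ≥0∞) ^ (2:ℝ) ≤ ((∫⁻ x in I, w x ^ (2:ℝ) ∂μ) ^ ((1:ℝ)/2)) ^ (2:ℝ) :=
        ENNReal.rpow_le_rpow hcs (by norm_num)
      rw [← ENNReal.rpow_mul, show (1:ℝ)/2 * 2 = 1 by norm_num, ENNReal.rpow_one] at h2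
      have h3 : (c + c) * (c + c) = (c + c) ^ (2:ℝ) := by
        rw [show (2:ℝ) = ((2:ℕ):ℝ) by norm_num, ENNReal.rpow_natCast, pow_two]
      rw [h3]; exact h2
    have hle2 : ∫⁻ x in I, w x ^ (2:ℝ) ∂μ ≤ ∫⁻ x, w x ^ (2:ℝ) ∂μ :=
      setLIntegral_le_lintegral I _
    have heq2 : ∫⁻ x, w x ^ (2:ℝ) ∂μ = ∫⁻ x, w x * w x ∂μ :=
      lintegral_congr (fun x => by
        rw [show (2:ℝ) = ((2:ℕ):ℝ) by norm_num, ENNReal.rpow_natCast, pow_two])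
    exact le_trans hsq (heq2 ▸ hle2)
  -- combine
  have big : 2 * (μ.prod μ) T + (c + c) * (c + c) ≤ 2 * (c + c) := by
    calc 2 * (μ.prod μ) T + (c + c) * (c + c)
        ≤ (∫⁻ x, w x * m x ∂μ + ∫⁻ y, w y * n y ∂μ) + ∫⁻ x, w x * w x ∂μ :=
      add_le_add hTineq hJ
    _ = 2 * (c + c) := hsum
  have hTc : (μ.prod μ) T + c = 1 := by
    have h := measure_add_diff (μ := μ.prod μ) hm.nullMeasurableSet (I ×ˢ I)
    have hun : C ∪ I ×ˢ I = I ×ˢ I := Set.union_eq_self_of_subset_left hsub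
    rw [hun, Measure.prod_prod, hμI, mul_one,
      show (μ.prod μ) C = c from rfl] at h
    rw [hT, add_comm]
    exact h
  have hTfin : (μ.prod μ) T ≠ ∞ := by
    intro h
    rw [h] at hTc
    simp at hTc
  -- pass to reals
  set r : ℝ := c.toReal with hr
  set t : ℝ := ((μ.prod μ) T).toReal with ht
  have htr : t + r = 1 := by
    rw [ht, hr, ← ENNReal.toReal_add hTfin hcfin, hTc, ENNReal.toReal_one]
  have hr1 : r ≤ 1 := by
    rw [hr, ← ENNReal.toReal_one]
    exact ENNReal.toReal_mono one_ne_top hc1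
  have bigr : 2 * t + (r + r) * (r + r) ≤ 2 * (r + r) := by
    have hfin1 : 2 * (μ.prod μ) T + (c + c) * (c + c) ≠ ∞ := by
      apply ENNReal.add_ne_top.mpr
      constructor
      · exact ENNReal.mul_ne_top (by norm_num) hTfin
      · exact ENNReal.mul_ne_top (ENNReal.add_ne_top.mpr ⟨hcfin, hcfin⟩)
          (ENNReal.add_ne_top.mpr ⟨hcfin, hcfin⟩)
    have hfin2 : 2 * (c + c) ≠ ∞ :=
      ENNReal.mul_ne_top (by norm_num) (ENNReal.add_ne_top.mpr ⟨hcfin, hcfin⟩)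
    have := ENNReal.toReal_mono hfin2 big
    rw [ENNReal.toReal_add (ENNReal.mul_ne_top (by norm_num) hTfin)
      (ENNReal.mul_ne_top (ENNReal.add_ne_top.mpr ⟨hcfin, hcfin⟩)
        (ENNReal.add_ne_top.mpr ⟨hcfin, hcfin⟩)),
      ENNReal.toReal_mul, ENNReal.toReal_mul, ENNReal.toReal_mul,
      ENNReal.toReal_add hcfin hcfin] at this
    simp only [ENNReal.toReal_ofNat] at this
    rw [ht, hr]
    linarith [this]
  have hhalf : (1:ℝ)/2 ≤ r := by nlinarith [htr, hr1, bigr]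
  have : ENNReal.ofReal (1/2) ≤ c := by
    rw [← ENNReal.ofReal_toReal hcfin]
    exact ENNReal.ofReal_le_ofReal hhalf
  have h12 : (1:ℝ≥0∞)/2 = ENNReal.ofReal (1/2) := by
    rw [ENNReal.ofReal_div_of_pos (by norm_num)]
    simp [ENNReal.ofReal_one, ENNReal.ofReal_ofNat]
  rw [h12]
  exact this

lemma halfCode_subset : halfCode ⊆ unitCube 2 := by
  rintro x (hx | hx) i
  · exact ⟨(hx i).1, le_trans (hx i).2 (by norm_num)⟩
  · exact ⟨le_trans (by norm_num) (hx i).1.le, (hx i).2⟩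

lemma halfCode_meas : MeasurableSet halfCode := by
  apply MeasurableSet.union
  · have : {x : Fin 2 → ℝ | ∀ i, x i ∈ Set.Icc (0:ℝ) (1/2)} =
        Set.pi Set.univ (fun _ => Set.Icc (0:ℝ) (1/2)) := by
      ext x; exact ⟨fun h i _ => h i, fun h i => h i (Set.mem_univ i)⟩
    rw [this]; exact MeasurableSet.univ_pi fun _ => measurableSet_Icc
  · have : {x : Fin 2 → ℝ | ∀ i, x i ∈ Set.Ioc (1/2:ℝ) 1} =
        Set.pi Set.univ (fun _ => Set.Ioc (1/2:ℝ) 1) := by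
      ext x; exact ⟨fun h i _ => h i, fun h i => h i (Set.mem_univ i)⟩
    rw [this]; exact MeasurableSet.univ_pi fun _ => measurableSet_Ioc

lemma halfCode_symmetric : IsSymmetric halfCode := by
  rintro x (hx | hx) σ
  · exact Or.inl fun i => hx (σ i)
  · exact Or.inr fun i => hx (σ i)

lemma covers_pair {X : Type*} (a : Fin 3 → X) {i j : Fin 3} (hij : i < j) :
    Covers ![a i, a j] a := by
  refine ⟨![i, j], ?_, ?_⟩
  · intro s t hst
    fin_cases s <;> fin_cases t <;> simp_all
  · intro s; fin_cases s <;> simp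

lemma halfCode_covers : CoversCube 2 3 halfCode := by
  intro a ha
  have key : ∀ i j : Fin 3, i < j → (a i ≤ 1/2 ↔ a j ≤ 1/2) → ∃ x ∈ halfCode, Covers x a := by
    intro i j hij h
    refine ⟨![a i, a j], ?_, covers_pair a hij⟩
    by_cases hi : a i ≤ 1/2
    · exact Or.inl fun s => by
        fin_cases s
        · exact ⟨(ha i).1, hi⟩
        · exact ⟨(ha j).1, h.mp hi⟩
    · refine Or.inr fun s => ?_
      have hj : ¬ a j ≤ 1/2 := fun hh => hi (h.mpr hh)
      fin_cases s
      · exact ⟨lt_of_not_ge hi, (ha i).2⟩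
      · exact ⟨lt_of_not_ge hj, (ha j).2⟩
  by_cases h01 : (a 0 ≤ 1/2) ↔ (a 1 ≤ 1/2)
  · exact key 0 1 (by decide) h01
  by_cases h02 : (a 0 ≤ 1/2) ↔ (a 2 ≤ 1/2)
  · exact key 0 2 (by decide) h02
  · exact key 1 2 (by decide) (by tauto)

lemma halfCode_volume : volume halfCode = 1/2 := by
  have h1 : {x : Fin 2 → ℝ | ∀ i, x i ∈ Set.Icc (0:ℝ) (1/2)} =
      Set.pi Set.univ (fun _ => Set.Icc (0:ℝ) (1/2)) := by
    ext x; exact ⟨fun h i _ => h i, fun h i => h i (Set.mem_univ i)⟩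
  have h2 : {x : Fin 2 → ℝ | ∀ i, x i ∈ Set.Ioc (1/2:ℝ) 1} =
      Set.pi Set.univ (fun _ => Set.Ioc (1/2:ℝ) 1) := by
    ext x; exact ⟨fun h i _ => h i, fun h i => h i (Set.mem_univ i)⟩
  have hdis : Disjoint {x : Fin 2 → ℝ | ∀ i, x i ∈ Set.Icc (0:ℝ) (1/2)}
      {x : Fin 2 → ℝ | ∀ i, x i ∈ Set.Ioc (1/2:ℝ) 1} := by
    rw [Set.disjoint_left]
    intro x hx hx'
    exact absurd (hx 0).2 (not_le.mpr (hx' 0).1)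
  rw [halfCode, measure_union hdis (by rw [h2]; exact MeasurableSet.univ_pi fun _ => measurableSet_Ioc),
    h1, h2, volume_pi_pi, volume_pi_pi]
  simp only [Real.volume_Icc, Real.volume_Ioc, Finset.prod_const, Finset.card_univ,
    Fintype.card_fin]
  rw [show ((1:ℝ)/2 - 0) = 1/2 by norm_num, show ((1:ℝ) - 1/2) = 1/2 by norm_num]
  rw [← ENNReal.ofReal_pow (by norm_num), ← ENNReal.ofReal_add (by positivity) (by positivity)]
  rw [show ((1:ℝ)/2)^2 + ((1:ℝ)/2)^2 = 1/2 by norm_num]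
  rw [ENNReal.ofReal_div_of_pos] <;> norm_num

lemma lower_bound (C : Set (Fin 2 → ℝ)) (hsub : C ⊆ unitCube 2) (hm : MeasurableSet C)
    (hcov : CoversCube 2 3 C) : 1/2 ≤ volume C := by
  set e : (Fin 2 → ℝ) ≃ᵐ ℝ × ℝ := MeasurableEquiv.finTwoArrow with he
  have hsymm : ∀ p : ℝ × ℝ, e.symm p = ![p.1, p.2] := by
    intro p
    funext i
    fin_cases i <;> rfl
  set C' : Set (ℝ × ℝ) := e.symm ⁻¹' C with hC'
  have hm' : MeasurableSet C' := e.symm.measurable hm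
  have hmem : ∀ x y : ℝ, ((x, y) ∈ C') ↔ ![x, y] ∈ C := by
    intro x y
    rw [hC', Set.mem_preimage, hsymm]
  have hvol : volume C' = volume C :=
    ((volume_preserving_finTwoArrow ℝ).symm e).measure_preimage hm.nullMeasurableSet
  have hsub' : C' ⊆ Set.Icc (0:ℝ) 1 ×ˢ Set.Icc (0:ℝ) 1 := by
    rintro ⟨x, y⟩ hp
    rw [hmem] at hp
    have h := hsub hp
    exact ⟨by simpa using h 0, by simpa using h 1⟩
  have hcov' : ∀ x ∈ Set.Icc (0:ℝ) 1, ∀ y ∈ Set.Icc (0:ℝ) 1, ∀ z ∈ Set.Icc (0:ℝ) 1,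
      (x,y) ∈ C' ∨ (x,z) ∈ C' ∨ (y,z) ∈ C' := by
    intro x hx y hy z hz
    set a : Fin 3 → ℝ := ![x, y, z] with ha
    have haC : a ∈ unitCube 3 := by
      intro i
      fin_cases i <;> simpa [ha]
    obtain ⟨b, hbC, g, hg, hgb⟩ := hcov a haC
    have hb : b = ![a (g 0), a (g 1)] := by
      funext i
      fin_cases i <;> simp [← hgb]
    have h01 : (g 0).val < (g 1).val := hg (by decide)
    have hlt0 : (g 0).val < 3 := (g 0).isLt
    have hlt1 : (g 1).val < 3 := (g 1).isLt
    have hcases : ((g 0).val = 0 ∧ (g 1).val = 1) ∨ ((g 0).val = 0 ∧ (g 1).val = 2) ∨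
        ((g 0).val = 1 ∧ (g 1).val = 2) := by omega
    rcases hcases with ⟨h0, h1⟩ | ⟨h0, h1⟩ | ⟨h0, h1⟩
    · left
      rw [hmem]
      have e0 : g 0 = 0 := Fin.ext h0
      have e1 : g 1 = 1 := Fin.ext h1
      rw [e0, e1] at hb
      rw [ha] at hb
      simp only [Matrix.cons_val_zero, Matrix.cons_val_one, Matrix.head_cons] at hb
      rwa [← hb]
    · right; left
      rw [hmem]
      have e0 : g 0 = 0 := Fin.ext h0
      have e1 : g 1 = 2 := Fin.ext h1
      rw [e0, e1] at hb
      rw [ha] at hb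
      simp only [Matrix.cons_val_zero, Matrix.cons_val_two, Matrix.tail_cons,
        Matrix.head_cons] at hb
      rwa [← hb]
    · right; right
      rw [hmem]
      have e0 : g 0 = 1 := Fin.ext h0
      have e1 : g 1 = 2 := Fin.ext h1
      rw [e0, e1] at hb
      rw [ha] at hb
      simp only [Matrix.cons_val_one, Matrix.cons_val_two, Matrix.tail_cons,
        Matrix.head_cons, Matrix.cons_val_zero] at hb
      rwa [← hb]
  rw [← hvol]
  exact key_lower C' hm' hsub' hcov'

lemma unitCube_two_volume : volume (unitCube 2) = 1 := by
  have h : unitCube 2 = Set.pi Set.univ (fun _ : Fin 2 => Set.Icc (0:ℝ) 1) := by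
    ext x; exact ⟨fun h i _ => h i, fun h i => h i (Set.mem_univ i)⟩
  rw [h, volume_pi_pi]
  simp [Real.volume_Icc]

lemma toReal_lb {C : Set (Fin 2 → ℝ)} (hsub : C ⊆ unitCube 2) (hm : MeasurableSet C)
    (hcov : CoversCube 2 3 C) : (1:ℝ)/2 ≤ (volume C).toReal := by
  have h1 : volume C ≤ 1 := le_trans (measure_mono hsub) (le_of_eq unitCube_two_volume)
  have hfin : volume C ≠ ∞ := fun h => by simp [h] at h1
  have := ENNReal.toReal_mono hfin (lower_bound C hsub hm hcov)
  rwa [show ((1:ℝ≥0∞)/2).toReal = 1/2 by simp [ENNReal.toReal_div]] at this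

/-- `C = [0,1/2]² ∪ (1/2,1]² ⊆ [0,1]²` is a symmetric measurable covering
single-insertion code over `[0,1]` of measure `1/2`; consequently
`s([0,1],3,2) = s*([0,1],3,2) = 1/2`. -/
theorem halfCode_optimal :
    halfCode ⊆ unitCube 2 ∧ MeasurableSet halfCode ∧ IsSymmetric halfCode ∧
      CoversCube 2 3 halfCode ∧ volume halfCode = 1 / 2 ∧
      sInf {v : ℝ | ∃ C : Set (Fin 2 → ℝ), C ⊆ unitCube 2 ∧ MeasurableSet C ∧
        CoversCube 2 3 C ∧ (volume C).toReal = v} = 1 / 2 ∧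
      sInf {v : ℝ | ∃ C : Set (Fin 2 → ℝ), C ⊆ unitCube 2 ∧ MeasurableSet C ∧
        IsSymmetric C ∧ CoversCube 2 3 C ∧ (volume C).toReal = v} = 1 / 2 := by
  refine ⟨halfCode_subset, halfCode_meas, halfCode_symmetric, halfCode_covers, halfCode_volume,
    ?_, ?_⟩
  · apply IsLeast.csInf_eq
    constructor
    · exact ⟨halfCode, halfCode_subset, halfCode_meas, halfCode_covers,
        by rw [halfCode_volume]; simp [ENNReal.toReal_div]⟩
    · rintro v ⟨C, hsub, hm, hcov, rfl⟩
      exact toReal_lb hsub hm hcov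
  · apply IsLeast.csInf_eq
    constructor
    · exact ⟨halfCode, halfCode_subset, halfCode_meas, halfCode_symmetric, halfCode_covers,
        by rw [halfCode_volume]; simp [ENNReal.toReal_div]⟩
    · rintro v ⟨C, hsub, hm, _, hcov, rfl⟩
      exact toReal_lb hsub hm hcov
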